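/- Let $(a_n)_{n\geq 1}$ and $(b_n)_{n\geq 1}$ be decreasing sequences of nonnegative reals tending to $0$, and suppose there exists $\gamma \in (0,1)$ such that $(n^{\gamma} b_n)_n$ is increasing. If there exists $B > 0$ such that for every increasing convex function $h: [0,\infty) \to [0,\infty)$ with $h(0)=0$ we have $\sum_{n\geq 1} h(b_n/B) \leq \sum_{n\geq 1} h(a_n) \leq \sum_{n\geq 1} h(B b_n)$, then there exist constants $c, C > 0$ such that $c\, b_n \leq a_n \leq C\, b_n$ for all $n$. -/

import Mathlib

open Filter Topology

lemma aux_bern {x p : ℝ} (hx : 0 ≤ x) (hp0 : 0 ≤ p) (hp1 : p ≤ 1) :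
    x ^ p + p * (x + 1) ^ (p - 1) ≤ (x + 1) ^ p := by
  have hx1 : (0:ℝ) < x + 1 := by linarith
  have hs : (-1:ℝ) ≤ -1 / (x+1) := by
    rw [neg_div, neg_le_neg_iff]
    rw [div_le_one hx1]; linarith
  have hb := rpow_one_add_le_one_add_mul_self hs hp0 hp1
  have h1 : (1 + -1/(x+1)) = x / (x+1) := by field_simp; ring
  rw [h1] at hb
  have h2 : (x / (x+1)) ^ p = x ^ p / (x+1) ^ p := Real.div_rpow hx hx1.le p
  rw [h2] at hb
  have hpow : (0:ℝ) < (x+1) ^ p := Real.rpow_pos_of_pos hx1 p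
  have h3 : (x+1) ^ (p-1) = (x+1) ^ p / (x+1) := by
    rw [Real.rpow_sub hx1, Real.rpow_one]
  rw [h3]
  have := mul_le_mul_of_nonneg_right hb hpow.le
  rw [div_mul_cancel₀ _ hpow.ne'] at this
  calc x ^ p + p * ((x+1)^p / (x+1)) = x ^ p + p * (x+1)^p / (x+1) := by ring
    _ ≤ (1 + p * (-1/(x+1))) * (x+1)^p + p * (x+1)^p / (x+1) := by linarith
    _ = (x+1)^p := by field_simp; ring

lemma aux_sum_rpow {γ : ℝ} (hγ0 : 0 < γ) (hγ1 : γ < 1) (n : ℕ) :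
    ∑ k ∈ Finset.range n, ((k:ℝ)+1) ^ (-γ) ≤ (n:ℝ) ^ (1-γ) / (1-γ) + 1 := by
  have h1γ : (0:ℝ) < 1 - γ := by linarith
  induction n with
  | zero => simp [Real.zero_rpow h1γ.ne']
  | succ n ih =>
    rw [Finset.sum_range_succ]
    have key := aux_bern (x := (n:ℝ)) (p := 1-γ) (Nat.cast_nonneg n) h1γ.le (by linarith)
    have : ((n:ℝ)+1) ^ (-γ) = ((n:ℝ)+1) ^ ((1-γ)-1) := by norm_num
    push_cast
    rw [this]
    have hd : (n:ℝ) ^ (1-γ) / (1-γ) + (1-γ) * ((n:ℝ)+1)^((1-γ)-1) / (1-γ)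
        ≤ ((n:ℝ)+1) ^ (1-γ) / (1-γ) := by
      rw [← add_div, div_le_div_iff_of_pos_right h1γ]  -- maybe wrong name
      exact key
    have h2 : (1-γ) * ((n:ℝ)+1)^((1-γ)-1) / (1-γ) = ((n:ℝ)+1)^((1-γ)-1) := by
      field_simp
    linarith [hd, h2, ih]

lemma aux_hprops (t : ℝ) (ht : 0 ≤ t) :
    MonotoneOn (fun x : ℝ => max (x - t) 0) (Set.Ici 0) ∧
    ConvexOn ℝ (Set.Ici 0) (fun x : ℝ => max (x - t) 0) ∧
    max ((0:ℝ) - t) 0 = 0 := by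
  refine ⟨(fun x _ y _ hxy => max_le_max (by linarith) le_rfl), ?_, max_eq_right (by linarith)⟩
  have h1 : ConvexOn ℝ (Set.Ici (0:ℝ)) (fun x : ℝ => x - t) := by
    have := (convexOn_id (𝕜 := ℝ) (convex_Ici (0:ℝ))).sub (concaveOn_const (𝕜 := ℝ) t (convex_Ici (0:ℝ)))
    exact this
  exact h1.sup (convexOn_const 0 (convex_Ici 0))

lemma aux_bsum {b : ℕ → ℝ} {γ : ℝ} (hγ0 : 0 < γ) (hγ1 : γ < 1)
    (hb_nonneg : ∀ n, 0 ≤ b n)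
    (hmono : ∀ m n : ℕ, 1 ≤ m → m ≤ n → (m:ℝ)^γ * b m ≤ (n:ℝ)^γ * b n)
    (n : ℕ) (hn : 1 ≤ n) :
    ∑ k ∈ Finset.range n, b (k+1) ≤ (1 + 1/(1-γ)) * ((n:ℝ) * b n) := by
  have h1γ : (0:ℝ) < 1 - γ := by linarith
  have hnpos : (0:ℝ) < n := by exact_mod_cast hn
  have step : ∀ k ∈ Finset.range n, b (k+1) ≤ (n:ℝ)^γ * b n * ((k:ℝ)+1)^(-γ) := by
    intro k hk
    rw [Finset.mem_range] at hk
    have hkpos : (0:ℝ) < (k:ℝ)+1 := by positivity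
    have h1 : ((k:ℝ)+1)^γ * ((k:ℝ)+1)^(-γ) = 1 := by
      rw [← Real.rpow_add hkpos]; simp
    have hm := hmono (k+1) n (by omega) (by omega)
    push_cast at hm
    have h2 : (((k:ℝ)+1)^γ * b (k+1)) * ((k:ℝ)+1)^(-γ) ≤ ((n:ℝ)^γ * b n) * ((k:ℝ)+1)^(-γ) :=
      mul_le_mul_of_nonneg_right hm (Real.rpow_nonneg hkpos.le _)
    calc b (k+1) = b (k+1) * (((k:ℝ)+1)^γ * ((k:ℝ)+1)^(-γ)) := by rw [h1, mul_one]
      _ = (((k:ℝ)+1)^γ * b (k+1)) * ((k:ℝ)+1)^(-γ) := by ring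
      _ ≤ (n:ℝ)^γ * b n * ((k:ℝ)+1)^(-γ) := h2
  have hsum0 := aux_sum_rpow hγ0 hγ1 n
  have hgg : (n:ℝ)^γ * (n:ℝ)^(1-γ) = (n:ℝ) := by
    rw [← Real.rpow_add hnpos]
    norm_num
  have hγn : (n:ℝ)^γ ≤ (n:ℝ) := by
    calc (n:ℝ)^γ ≤ (n:ℝ)^(1:ℝ) :=
      Real.rpow_le_rpow_of_exponent_le (by exact_mod_cast hn) hγ1.le
    _ = (n:ℝ) := Real.rpow_one _
  calc ∑ k ∈ Finset.range n, b (k+1)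
      ≤ ∑ k ∈ Finset.range n, (n:ℝ)^γ * b n * ((k:ℝ)+1)^(-γ) := Finset.sum_le_sum step
    _ = (n:ℝ)^γ * b n * ∑ k ∈ Finset.range n, ((k:ℝ)+1)^(-γ) := by rw [Finset.mul_sum]
    _ ≤ (n:ℝ)^γ * b n * ((n:ℝ)^(1-γ)/(1-γ) + 1) := by
        apply mul_le_mul_of_nonneg_left hsum0
        have := hb_nonneg n; positivity
    _ = ((n:ℝ)^γ * (n:ℝ)^(1-γ)) * b n / (1-γ) + (n:ℝ)^γ * b n := by ring
    _ ≤ (1 + 1/(1-γ)) * ((n:ℝ) * b n) := by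
        rw [hgg]
        have h3 : (n:ℝ)^γ * b n ≤ (n:ℝ) * b n :=
          mul_le_mul_of_nonneg_right hγn (hb_nonneg n)
        have h4 : (n:ℝ) * b n / (1-γ) = 1/(1-γ) * ((n:ℝ)*b n) := by ring
        linarith

/-- comparison of decreasing sequences via sums of convex functions. -/
theorem stmt0 (a b : ℕ → ℝ)
    (ha_nonneg : ∀ n, 0 ≤ a n) (hb_nonneg : ∀ n, 0 ≤ b n)
    (ha_dec : ∀ m n, 1 ≤ m → m ≤ n → a n ≤ a m)
    (hb_dec : ∀ m n, 1 ≤ m → m ≤ n → b n ≤ b m)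
    (ha_lim : Tendsto a atTop (𝓝 0)) (hb_lim : Tendsto b atTop (𝓝 0))
    (hγ : ∃ γ ∈ Set.Ioo (0:ℝ) 1,
      ∀ m n : ℕ, 1 ≤ m → m ≤ n → (m : ℝ) ^ γ * b m ≤ (n : ℝ) ^ γ * b n)
    (hB : ∃ B > (0:ℝ), ∀ h : ℝ → ℝ, MonotoneOn h (Set.Ici 0) →
      ConvexOn ℝ (Set.Ici 0) h → h 0 = 0 →
      (∑' n : ℕ, ENNReal.ofReal (h (b (n+1) / B)) ≤ ∑' n : ℕ, ENNReal.ofReal (h (a (n+1)))) ∧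
      (∑' n : ℕ, ENNReal.ofReal (h (a (n+1))) ≤ ∑' n : ℕ, ENNReal.ofReal (h (B * b (n+1))))) :
    ∃ c > (0:ℝ), ∃ C > (0:ℝ), ∀ n : ℕ, 1 ≤ n → c * b n ≤ a n ∧ a n ≤ C * b n := by
  obtain ⟨γ, ⟨hγ0, hγ1⟩, hmono⟩ := hγ
  obtain ⟨B, hBpos, hsum⟩ := hB
  have h1γ : (0:ℝ) < 1 - γ := by linarith
  set K : ℝ := 1 + 1/(1-γ) with hK
  have hKpos : 0 < K := by rw [hK]; positivity
  set C : ℝ := B + B * K with hC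
  have hCpos : 0 < C := by rw [hC]; positivity
  have hbsum := aux_bsum hγ0 hγ1 hb_nonneg hmono
  -- Upper bound
  have hupper : ∀ n : ℕ, 1 ≤ n → a n ≤ C * b n := by
    intro n hn
    have hnposR : (0:ℝ) < n := by exact_mod_cast hn
    set t := B * b n with ht
    have htnn : 0 ≤ t := mul_nonneg hBpos.le (hb_nonneg n)
    obtain ⟨hhm, hhc, hh0⟩ := aux_hprops t htnn
    have hineq := (hsum (fun x => max (x - t) 0) hhm hhc hh0).2
    have hR : ∑' k : ℕ, ENNReal.ofReal (max (B * b (k+1) - t) 0)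
        = ∑ k ∈ Finset.range n, ENNReal.ofReal (max (B * b (k+1) - t) 0) := by
      apply tsum_eq_sum
      intro k hk
      rw [Finset.mem_range, not_lt] at hk
      have hb := hb_dec n (k+1) hn (by omega)
      have : max (B * b (k+1) - t) 0 = 0 := max_eq_right
        (by rw [ht]; linarith [mul_le_mul_of_nonneg_left hb hBpos.le])
      rw [this, ENNReal.ofReal_zero]
    have hL : (n : ENNReal) * ENNReal.ofReal (max (a n - t) 0)
        ≤ ∑' k : ℕ, ENNReal.ofReal (max (a (k+1) - t) 0) := by
      calc (n : ENNReal) * ENNReal.ofReal (max (a n - t) 0)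
          = ∑ _k ∈ Finset.range n, ENNReal.ofReal (max (a n - t) 0) := by
            rw [Finset.sum_const, Finset.card_range, nsmul_eq_mul]
        _ ≤ ∑ k ∈ Finset.range n, ENNReal.ofReal (max (a (k+1) - t) 0) := by
            apply Finset.sum_le_sum
            intro k hk
            rw [Finset.mem_range] at hk
            have := ha_dec (k+1) n (by omega) (by omega)
            exact ENNReal.ofReal_le_ofReal (max_le_max (by linarith) le_rfl)
        _ ≤ _ := ENNReal.sum_le_tsum _
    have hRbound : ∑ k ∈ Finset.range n, ENNReal.ofReal (max (B * b (k+1) - t) 0)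
        ≤ ENNReal.ofReal (B * (K * ((n:ℝ) * b n))) := by
      calc ∑ k ∈ Finset.range n, ENNReal.ofReal (max (B * b (k+1) - t) 0)
          ≤ ∑ k ∈ Finset.range n, ENNReal.ofReal (B * b (k+1)) := by
            apply Finset.sum_le_sum
            intro k _
            apply ENNReal.ofReal_le_ofReal
            apply max_le (by linarith) (mul_nonneg hBpos.le (hb_nonneg _))
        _ = ENNReal.ofReal (∑ k ∈ Finset.range n, B * b (k+1)) := by
            rw [ENNReal.ofReal_sum_of_nonneg]
            intro k _
            exact mul_nonneg hBpos.le (hb_nonneg _)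
        _ ≤ ENNReal.ofReal (B * (K * ((n:ℝ) * b n))) := by
            apply ENNReal.ofReal_le_ofReal
            rw [← Finset.mul_sum]
            exact mul_le_mul_of_nonneg_left (hbsum n hn) hBpos.le
    have hfinal : ENNReal.ofReal ((n:ℝ) * max (a n - t) 0)
        ≤ ENNReal.ofReal (B * (K * ((n:ℝ) * b n))) := by
      rw [ENNReal.ofReal_mul (Nat.cast_nonneg n), ENNReal.ofReal_natCast]
      calc _ ≤ ∑' k : ℕ, ENNReal.ofReal (max (a (k+1) - t) 0) := hL
        _ ≤ ∑' k : ℕ, ENNReal.ofReal (max (B * b (k+1) - t) 0) := hineq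
        _ = _ := hR
        _ ≤ _ := hRbound
    rw [ENNReal.ofReal_le_ofReal_iff
      (mul_nonneg hBpos.le (mul_nonneg hKpos.le (mul_nonneg hnposR.le (hb_nonneg n))))] at hfinal
    have h1 : (n:ℝ) * (a n - t) ≤ (n:ℝ) * ((B * K) * b n) := by
      calc (n:ℝ) * (a n - t) ≤ (n:ℝ) * max (a n - t) 0 :=
          mul_le_mul_of_nonneg_left (le_max_left _ _) hnposR.le
        _ ≤ B * (K * ((n:ℝ) * b n)) := hfinal
        _ = (n:ℝ) * ((B * K) * b n) := by ring
    have h2 := le_of_mul_le_mul_left h1 hnposR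
    rw [ht] at h2
    rw [hC]; linarith
  -- Choose M
  set D : ℝ := C * K with hD
  have hDpos : 0 < D := mul_pos hCpos hKpos
  set X : ℝ := 4 * B * D + 1 with hX
  have hXpos : (0:ℝ) < X := by positivity
  obtain ⟨M0, hM0⟩ := exists_nat_gt (X ^ (1/(1-γ)))
  set M : ℕ := max M0 2 with hM
  have hM2 : 2 ≤ M := le_max_right _ _
  have hMR : (2:ℝ) ≤ (M:ℝ) := by exact_mod_cast hM2
  have hMpos : (0:ℝ) < M := by linarith
  have hMX : X < (M:ℝ) ^ (1-γ) := by
    have hlt : X ^ (1/(1-γ)) < (M:ℝ) := lt_of_lt_of_le hM0 (by exact_mod_cast le_max_left M0 2)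
    have h0 : (0:ℝ) ≤ X ^ (1/(1-γ)) := Real.rpow_nonneg hXpos.le _
    have := Real.rpow_lt_rpow h0 hlt h1γ
    rwa [← Real.rpow_mul hXpos.le, one_div, inv_mul_cancel₀ h1γ.ne', Real.rpow_one] at this
  have hMkey : 2 * B * D < ((M:ℝ) - 1) * (M:ℝ) ^ (-γ) := by
    have h1 : (M:ℝ) ^ (1-γ) = (M:ℝ) * (M:ℝ) ^ (-γ) := by
      rw [← Real.rpow_one_add' hMpos.le (by intro h; linarith [h] )]
      congr 1
    have hMg : (0:ℝ) < (M:ℝ) ^ (-γ) := Real.rpow_pos_of_pos hMpos _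
    have h2 : (M:ℝ) / 2 ≤ (M:ℝ) - 1 := by linarith
    have h3 : ((M:ℝ)/2) * (M:ℝ)^(-γ) ≤ ((M:ℝ) - 1) * (M:ℝ)^(-γ) :=
      mul_le_mul_of_nonneg_right h2 hMg.le
    have h4 : (4 * B * D + 1) < (M:ℝ) * (M:ℝ)^(-γ) := by rw [← h1]; exact hMX
    linarith
  set c : ℝ := (M:ℝ)^(-γ) / (2*B) with hc
  have hMgpos : (0:ℝ) < (M:ℝ)^(-γ) := Real.rpow_pos_of_pos hMpos _
  have hcpos : 0 < c := by rw [hc]; positivity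
  refine ⟨c, hcpos, C, hCpos, fun n hn => ⟨?_, hupper n hn⟩⟩
  -- Lower bound
  by_contra hcon
  push_neg at hcon
  have hnposR : (0:ℝ) < n := by exact_mod_cast hn
  have hbpos : 0 < b n := by
    rcases lt_or_ge 0 (b n) with h | h
    · exact h
    · exfalso
      have h2 : (0:ℝ) ≤ c * -b n := mul_nonneg hcpos.le (by linarith)
      have h3 := ha_nonneg n
      nlinarith
  set t := a n with ht
  obtain ⟨hhm, hhc, hh0⟩ := aux_hprops t (ha_nonneg n)
  have hineq := (hsum (fun x => max (x - t) 0) hhm hhc hh0).1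
  have hR : ∑' k : ℕ, ENNReal.ofReal (max (a (k+1) - t) 0)
      = ∑ k ∈ Finset.range n, ENNReal.ofReal (max (a (k+1) - t) 0) := by
    apply tsum_eq_sum
    intro k hk
    rw [Finset.mem_range, not_lt] at hk
    have hak := ha_dec n (k+1) hn (by omega)
    have : max (a (k+1) - t) 0 = 0 := max_eq_right (by rw [ht]; linarith)
    rw [this, ENNReal.ofReal_zero]
  have hRbound : ∑ k ∈ Finset.range n, ENNReal.ofReal (max (a (k+1) - t) 0)
      ≤ ENNReal.ofReal (D * ((n:ℝ) * b n)) := by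
    calc ∑ k ∈ Finset.range n, ENNReal.ofReal (max (a (k+1) - t) 0)
        ≤ ∑ k ∈ Finset.range n, ENNReal.ofReal (C * b (k+1)) := by
          apply Finset.sum_le_sum
          intro k _
          apply ENNReal.ofReal_le_ofReal
          have h5 := hupper (k+1) (by omega)
          have h6 := ha_nonneg n
          apply max_le (by linarith) (mul_nonneg hCpos.le (hb_nonneg (k+1)))
      _ = ENNReal.ofReal (∑ k ∈ Finset.range n, C * b (k+1)) := by
          rw [ENNReal.ofReal_sum_of_nonneg]
          intro k _
          exact mul_nonneg hCpos.le (hb_nonneg _)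
      _ ≤ ENNReal.ofReal (D * ((n:ℝ) * b n)) := by
          apply ENNReal.ofReal_le_ofReal
          rw [← Finset.mul_sum, hD]
          calc C * ∑ k ∈ Finset.range n, b (k+1) ≤ C * (K * ((n:ℝ) * b n)) :=
            mul_le_mul_of_nonneg_left (hbsum n hn) hCpos.le
          _ = C * K * ((n:ℝ) * b n) := by ring
  -- lower bound on LHS
  have hterm : ∀ k ∈ Finset.Ico n (M*n), c * b n ≤ max (b (k+1) / B - t) 0 := by
    intro k hk
    rw [Finset.mem_Ico] at hk
    obtain ⟨hk1, hk2⟩ := hk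
    have hkpos : (0:ℝ) < (k:ℝ)+1 := by positivity
    have hm := hmono n (k+1) hn (by omega)
    push_cast at hm
    have hbk : 0 ≤ b (k+1) := hb_nonneg _
    have hup : ((k:ℝ)+1)^γ ≤ ((M:ℝ) * (n:ℝ))^γ := by
      apply Real.rpow_le_rpow hkpos.le _ hγ0.le
      have : (k:ℕ) + 1 ≤ M * n := by omega
      exact_mod_cast this
    have h7 : ((M:ℝ) * (n:ℝ))^γ * b (k+1) ≥ (n:ℝ)^γ * b n := by
      calc ((M:ℝ) * (n:ℝ))^γ * b (k+1) ≥ ((k:ℝ)+1)^γ * b (k+1) :=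
          mul_le_mul_of_nonneg_right hup hbk
        _ ≥ (n:ℝ)^γ * b n := hm
    have hmul : ((M:ℝ) * (n:ℝ))^γ = (M:ℝ)^γ * (n:ℝ)^γ :=
      Real.mul_rpow hMpos.le hnposR.le
    have hnγ : (0:ℝ) < (n:ℝ)^γ := Real.rpow_pos_of_pos hnposR _
    have hMγ : (0:ℝ) < (M:ℝ)^γ := Real.rpow_pos_of_pos hMpos _
    have h8 : b (k+1) ≥ (M:ℝ)^(-γ) * b n := by
      have h7' : (n:ℝ)^γ * b n ≤ (n:ℝ)^γ * ((M:ℝ)^γ * b (k+1)) := by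
        calc (n:ℝ)^γ * b n ≤ ((M:ℝ)*(n:ℝ))^γ * b (k+1) := h7
          _ = (n:ℝ)^γ * ((M:ℝ)^γ * b (k+1)) := by rw [hmul]; ring
      have h8' : b n ≤ (M:ℝ)^γ * b (k+1) := le_of_mul_le_mul_left h7' hnγ
      have h9 : (M:ℝ)^(-γ) = ((M:ℝ)^γ)⁻¹ := by
        rw [Real.rpow_neg hMpos.le]
      rw [ge_iff_le, h9, inv_mul_le_iff₀ hMγ]
      exact h8'
    -- b(k+1)/B - a n ≥ M^{-γ} b n / B - a n > M^{-γ} b n/B - c b n = c b n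
    have h10 : c * b n ≤ b (k+1) / B - t := by
      rw [ht]
      have h11 : (M:ℝ)^(-γ) * b n / B - c * b n = c * b n := by
        rw [hc]; field_simp; ring
      have h12 : (M:ℝ)^(-γ) * b n / B ≤ b (k+1) / B :=
        div_le_div_of_nonneg_right h8 hBpos.le  -- check name
      linarith [hcon]
    exact le_trans h10 (le_max_left _ _)
  have hLbound : ENNReal.ofReal ((((M:ℝ) - 1) * (n:ℝ)) * (c * b n))
      ≤ ∑' k : ℕ, ENNReal.ofReal (max (b (k+1) / B - t) 0) := by
    have hcard : (Finset.Ico n (M*n)).card = M*n - n := Nat.card_Ico _ _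
    have hcast : (((M*n - n : ℕ)):ℝ) = ((M:ℝ) - 1) * (n:ℝ) := by
      have : n ≤ M * n := by nlinarith [hn, hM2]
      rw [Nat.cast_sub this]
      push_cast
      ring
    calc ENNReal.ofReal ((((M:ℝ) - 1) * (n:ℝ)) * (c * b n))
        = ((M*n - n : ℕ) : ENNReal) * ENNReal.ofReal (c * b n) := by
          rw [ENNReal.ofReal_mul (mul_nonneg (by linarith : (0:ℝ) ≤ (M:ℝ)-1) hnposR.le),
            ← hcast, ENNReal.ofReal_natCast]
      _ = ∑ _k ∈ Finset.Ico n (M*n), ENNReal.ofReal (c * b n) := by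
          rw [Finset.sum_const, Nat.card_Ico, nsmul_eq_mul]
      _ ≤ ∑ k ∈ Finset.Ico n (M*n), ENNReal.ofReal (max (b (k+1) / B - t) 0) := by
          apply Finset.sum_le_sum
          intro k hk
          exact ENNReal.ofReal_le_ofReal (hterm k hk)
      _ ≤ _ := ENNReal.sum_le_tsum _
  have hfinal : ENNReal.ofReal ((((M:ℝ) - 1) * (n:ℝ)) * (c * b n))
      ≤ ENNReal.ofReal (D * ((n:ℝ) * b n)) := by
    calc _ ≤ ∑' k : ℕ, ENNReal.ofReal (max (b (k+1) / B - t) 0) := hLbound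
      _ ≤ ∑' k : ℕ, ENNReal.ofReal (max (a (k+1) - t) 0) := hineq
      _ = _ := hR
      _ ≤ _ := hRbound
  rw [ENNReal.ofReal_le_ofReal_iff (by positivity)] at hfinal
  -- contradiction: (M-1)*c ≤ D but (M-1)*M^{-γ} > 2BD
  have hnb : (0:ℝ) < (n:ℝ) * b n := mul_pos hnposR hbpos
  have h13 : ((M:ℝ) - 1) * c ≤ D := by
    have h' : (((M:ℝ)-1)*c) * ((n:ℝ)*b n) ≤ D * ((n:ℝ)*b n) := by
      calc (((M:ℝ)-1)*c) * ((n:ℝ)*b n) = (((M:ℝ) - 1) * (n:ℝ)) * (c * b n) := by ring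
        _ ≤ D * ((n:ℝ)*b n) := hfinal
    exact le_of_mul_le_mul_right h' hnb
  have h14 : ((M:ℝ) - 1) * c > D := by
    rw [hc]
    rw [div_eq_mul_inv]
    have h15 : ((M:ℝ) - 1) * ((M:ℝ)^(-γ) * (2*B)⁻¹) = (((M:ℝ)-1) * (M:ℝ)^(-γ)) / (2*B) := by
      ring
    rw [h15]
    rw [gt_iff_lt, lt_div_iff₀ (by positivity)]
    linarith
  linarith
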